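/- arXiv:2003.06916 — 2 statements merged into one kernel-verified Lean document; each statement's English description precedes it below -/
import Mathlib

section
/- Let 𝐯 be a binary sequence whose language is closed under the letter-exchange morphism E (E(0)=1, E(1)=0), and let 𝐮 = S(𝐯) be its first-difference sequence. Then a non-empty word w is a right special factor of 𝐯 if and only if S(w) is a right special factor of 𝐮. -/
/-- The first-difference map on binary words:
`S(v₀v₁⋯vₙ) = u₀⋯u_{n-1}` with `uᵢ = vᵢ + v_{i+1} (mod 2)`. -/
def Smap (v : List (ZMod 2)) : List (ZMod 2) :=
  (List.range (v.length - 1)).map fun i => v.getD i 0 + v.getD (i + 1) 0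

/-- `w` occurs in the sequence `u` at position `i`. -/
def OccursAt (u : ℕ → ZMod 2) (w : List (ZMod 2)) (i : ℕ) : Prop :=
  ∀ k < w.length, w[k]? = some (u (i + k))

/-- `w` is a factor of the sequence `u`. -/
def IsFactor (u : ℕ → ZMod 2) (w : List (ZMod 2)) : Prop :=
  ∃ i, OccursAt u w i

/-- The first-difference map on binary sequences. -/
def SSeq (v : ℕ → ZMod 2) : ℕ → ZMod 2 := fun i => v i + v (i + 1)

/-- `w` is a right special factor of `u`: both `w0` and `w1` are factors. -/
def RightSpecial (u : ℕ → ZMod 2) (w : List (ZMod 2)) : Prop :=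
  IsFactor u (w ++ [0]) ∧ IsFactor u (w ++ [1])

lemma zmod2_cases (x : ZMod 2) : x = 0 ∨ x = 1 := by revert x; decide

lemma Smap_length (w : List (ZMod 2)) : (Smap w).length = w.length - 1 := by
  simp [Smap]

lemma Smap_getElem? (w : List (ZMod 2)) (k : ℕ) (hk : k < w.length - 1) :
    (Smap w)[k]? = some (w.getD k 0 + w.getD (k + 1) 0) := by
  simp [Smap, hk]

lemma Smap_concat (w : List (ZMod 2)) (hw : w ≠ []) (a : ZMod 2) :
    Smap (w ++ [a]) = Smap w ++ [w.getLast hw + a] := by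
  have hn : 1 ≤ w.length := List.length_pos_iff.mpr hw
  apply List.ext_getElem?
  intro k
  have hlen : (w ++ [a]).length - 1 = w.length := by simp
  rcases lt_trichotomy k (w.length - 1) with h | h | h
  · rw [Smap_getElem? _ _ (by omega : k < (w ++ [a]).length - 1)]
    rw [List.getElem?_append_left (by rw [Smap_length]; omega)]
    rw [Smap_getElem? _ _ h]
    rw [List.getD_append _ _ _ _ (by omega), List.getD_append _ _ _ _ (by omega)]
  · subst h
    rw [Smap_getElem? _ _ (by omega : w.length - 1 < (w ++ [a]).length - 1)]
    have h1 : w.length - 1 + 1 = w.length := by omega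
    rw [List.getElem?_append_right (by rw [Smap_length]), Smap_length, Nat.sub_self]
    rw [List.getD_append _ _ _ _ (by omega), h1]
    have h2 : (w ++ [a]).getD w.length 0 = a := by
      rw [List.getD_eq_getElem?_getD, List.getElem?_append_right (le_refl _), Nat.sub_self]
      simp
    rw [h2]
    simp [List.getLast_eq_getElem, List.getD_eq_getElem?_getD,
      List.getElem?_eq_getElem (show w.length - 1 < w.length by omega)]
  · rw [List.getElem?_eq_none (by rw [Smap_length]; omega),
        List.getElem?_eq_none (by simp [Smap_length]; omega)]

lemma zmod2_add_self (x : ZMod 2) : x + x = 0 := by revert x; decide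

lemma getD_of_occursAt {u w i} (h : OccursAt u w i) (k : ℕ) (hk : k < w.length) :
    w.getD k 0 = u (i + k) := by
  rw [List.getD_eq_getElem?_getD, h k hk]; rfl

lemma occursAt_Smap {v : ℕ → ZMod 2} {w : List (ZMod 2)} {i : ℕ}
    (h : OccursAt v w i) : OccursAt (SSeq v) (Smap w) i := by
  intro k hk
  rw [Smap_length] at hk
  rw [Smap_getElem? _ _ hk, getD_of_occursAt h k (by omega),
    getD_of_occursAt h (k + 1) (by omega)]
  rfl

lemma reconstruct {v : ℕ → ZMod 2} {w : List (ZMod 2)} {i : ℕ}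
    (h : OccursAt (SSeq v) (Smap w) i) :
    OccursAt v (w.map (· + (w.getD 0 0 + v i))) i := by
  set d := w.getD 0 0 + v i with hd
  have key : ∀ k, k < w.length → w.getD k 0 + d = v (i + k) := by
    intro k
    induction k with
    | zero =>
      intro _
      rw [hd, ← add_assoc, zmod2_add_self, zero_add]
      rfl
    | succ k ih =>
      intro hk
      have h1 := ih (by omega)
      have h2 : SSeq v (i + k) = w.getD k 0 + w.getD (k + 1) 0 := by
        have := h k (by rw [Smap_length]; omega)
        rw [Smap_getElem? _ _ (by omega)] at this
        exact (Option.some_inj.mp this).symm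
      have h3 : v (i + (k + 1)) = v (i + k) + SSeq v (i + k) := by
        show v (i + k + 1) = v (i + k) + (v (i + k) + v (i + k + 1))
        rw [← add_assoc, zmod2_add_self, zero_add]
      rw [h3, h2, ← h1]
      linear_combination (-1 : ZMod 2) * zmod2_add_self (w.getD k 0)
  intro k hk
  rw [List.length_map] at hk
  rw [List.getElem?_map, List.getElem?_eq_getElem hk]
  simp only [Option.map_some]
  congr 1
  rw [← key k hk, List.getD_eq_getElem?_getD, List.getElem?_eq_getElem hk]
  rfl

lemma map_add_one_add_one (l : List (ZMod 2)) : (l.map (· + 1)).map (· + 1) = l := by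
  rw [List.map_map]
  have : ((· + 1) ∘ (· + 1) : ZMod 2 → ZMod 2) = id := by
    funext x; simp only [Function.comp_apply, id_eq]; revert x; decide
  rw [this, List.map_id]

/-- If the language of a binary sequence `v` is closed under the exchange of
letters, then a non-empty word `w` is right special in `v` iff `S(w)` is right
special in `S(v)`. -/
theorem rightSpecial_iff_Smap (v : ℕ → ZMod 2)
    (hE : ∀ w : List (ZMod 2), IsFactor v w → IsFactor v (w.map (· + 1)))
    (w : List (ZMod 2)) (hw : w ≠ []) :
    RightSpecial v w ↔ RightSpecial (SSeq v) (Smap w) := by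
  constructor
  · rintro ⟨h0, h1⟩
    have key : ∀ b : ZMod 2, IsFactor (SSeq v) (Smap w ++ [b]) := by
      intro b
      have ha : IsFactor v (w ++ [w.getLast hw + b]) := by
        rcases zmod2_cases (w.getLast hw + b) with h | h <;> rw [h]
        exacts [h0, h1]
      obtain ⟨i, hi⟩ := ha
      refine ⟨i, ?_⟩
      have hs := occursAt_Smap hi
      rwa [Smap_concat w hw, ← add_assoc, zmod2_add_self, zero_add] at hs
    exact ⟨key 0, key 1⟩
  · rintro ⟨h0, h1⟩
    have key : ∀ b : ZMod 2, IsFactor v (w ++ [b]) := by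
      intro b
      have hf : IsFactor (SSeq v) (Smap (w ++ [b])) := by
        rw [Smap_concat w hw]
        rcases zmod2_cases (w.getLast hw + b) with h | h <;> rw [h]
        exacts [h0, h1]
      obtain ⟨i, hi⟩ := hf
      have hr := reconstruct hi
      rcases zmod2_cases ((w ++ [b]).getD 0 0 + v i) with h | h <;> rw [h] at hr
      · exact ⟨i, by simpa using hr⟩
      · have := hE _ ⟨i, hr⟩
        rwa [map_add_one_add_one] at this
    exact ⟨key 0, key 1⟩
end

section
/- Let 𝐯 be a binary aperiodic uniformly recurrent sequence whose language is closed under the letter exchange E, and let 𝐮 = S(𝐯). For any non-empty factor v of 𝐯 beginning with 0 and with ind_𝐯(v) > 1, the word u = S(v0) is a stable factor of 𝐮 and satisfies ind_𝐮(u) + 1/|u| = ind_𝐯(v). -/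
/-- `z` has fractional root `r`: `z` is a prefix of `r^ω`. -/
def HasRoot (z r : List (ZMod 2)) : Prop :=
  r ≠ [] ∧ ∀ k < z.length, z[k]? = r[k % r.length]?

/-- The index of `w` in `u`. -/
noncomputable def ind (u : ℕ → ZMod 2) (w : List (ZMod 2)) : EReal :=
  sSup {e : EReal | ∃ z : List (ZMod 2), IsFactor u z ∧ HasRoot z w ∧
    e = (((z.length : ℝ) / (w.length : ℝ) : ℝ) : EReal)}

/-- `v` is uniformly recurrent: every factor occurs with bounded gaps. -/
def UniformlyRecurrent (v : ℕ → ZMod 2) : Prop :=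
  ∀ w : List (ZMod 2), IsFactor v w →
    ∃ N, ∀ i, ∃ j, i ≤ j ∧ j < i + N ∧ OccursAt v w j

/-- `v` is aperiodic: not eventually periodic. -/
def Aperiodic (v : ℕ → ZMod 2) : Prop :=
  ¬ ∃ p N, 0 < p ∧ ∀ i, N ≤ i → v (i + p) = v i

lemma getD_some {l : List (ZMod 2)} {k : ℕ} (h : k < l.length) :
    l[k]? = some (l.getD k 0) := by
  rw [List.getElem?_eq_getElem h, List.getD_eq_getElem l 0 h]
lemma Smap_getD (w : List (ZMod 2)) {j : ℕ} (h : j < w.length - 1) :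
    (Smap w).getD j 0 = w.getD j 0 + w.getD (j + 1) 0 := by
  have h' : j < (Smap w).length := by rw [Smap_length]; exact h
  rw [List.getD_eq_getElem _ 0 h']
  simp [Smap]

lemma occursAt_iff {u : ℕ → ZMod 2} {w : List (ZMod 2)} {i : ℕ} :
    OccursAt u w i ↔ ∀ k < w.length, w.getD k 0 = u (i + k) := by
  constructor
  · intro h k hk
    have := h k hk; rw [getD_some hk] at this; exact Option.some.inj this
  · intro h k hk; rw [getD_some hk, h k hk]

lemma hasRoot_iff {z r : List (ZMod 2)} (hr : r ≠ []) :
    HasRoot z r ↔ ∀ k < z.length, z.getD k 0 = r.getD (k % r.length) 0 := by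
  have hrl : 0 < r.length := List.length_pos_iff.mpr hr
  constructor
  · intro h k hk
    have := h.2 k hk
    rw [getD_some hk, getD_some (Nat.mod_lt _ hrl)] at this
    exact Option.some.inj this
  · intro h
    refine ⟨hr, fun k hk => ?_⟩
    rw [getD_some hk, getD_some (Nat.mod_lt _ hrl), h k hk]

lemma u_getD {x : List (ZMod 2)} (hne : x ≠ []) (h0 : x.getD 0 0 = 0) (k : ℕ) :
    (Smap (x ++ [0])).getD (k % x.length) 0
      = x.getD (k % x.length) 0 + x.getD ((k + 1) % x.length) 0 := by
  have hn : 0 < x.length := List.length_pos_iff.mpr hne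
  have hr : k % x.length < x.length := Nat.mod_lt _ hn
  have hlen : (x ++ [0] : List (ZMod 2)).length = x.length + 1 := by simp
  have h1 : k % x.length < (x ++ [0] : List (ZMod 2)).length - 1 := by omega
  rw [Smap_getD _ h1]
  have e1 : (x ++ [0] : List (ZMod 2)).getD (k % x.length) 0 = x.getD (k % x.length) 0 := by
    rw [List.getD_append _ _ _ _ hr]
  rw [e1]
  rcases Nat.lt_or_ge (k % x.length + 1) x.length with h2 | h2
  · have e2 : (k + 1) % x.length = k % x.length + 1 := by
      conv_lhs => rw [Nat.add_mod]
      simp [Nat.mod_eq_of_lt h2]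
    rw [e2, List.getD_append _ _ _ _ h2]
  · have h2' : k % x.length + 1 = x.length := by omega
    have e2 : (k + 1) % x.length = 0 := by
      conv_lhs => rw [Nat.add_mod]
      simp [h2']
    rw [e2, h0, h2']
    have h3 : (x ++ [0] : List (ZMod 2)).getD x.length 0 = 0 := by
      rw [List.getD_append_right _ _ _ _ (le_refl _)]
      simp
    rw [h3]

lemma occ_push {v : ℕ → ZMod 2} {z : List (ZMod 2)} {i : ℕ}
    (h : OccursAt v z i) : OccursAt (SSeq v) (Smap z) i := by
  rw [occursAt_iff] at h ⊢
  intro k hk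
  rw [Smap_length] at hk
  rw [Smap_getD z hk, SSeq]
  have h1 := h k (by omega)
  have h2 := h (k + 1) (by omega)
  rw [h1, h2, Nat.add_assoc]

lemma Smap_ne_nil {x : List (ZMod 2)} (hne : x ≠ []) :
    Smap (x ++ [0]) ≠ [] := by
  have : (Smap (x ++ [0])).length = x.length := by
    rw [Smap_length]; simp
  intro h
  rw [h] at this
  exact hne (List.length_eq_zero_iff.mp (by simpa using this.symm))

lemma root_push {x z : List (ZMod 2)} (hne : x ≠ []) (h0 : x.getD 0 0 = 0)
    (h : HasRoot z x) : HasRoot (Smap z) (Smap (x ++ [0])) := by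
  have hn : 0 < x.length := List.length_pos_iff.mpr hne
  have hulen : (Smap (x ++ [0])).length = x.length := by rw [Smap_length]; simp
  rw [hasRoot_iff hne] at h
  rw [hasRoot_iff (Smap_ne_nil hne)]
  intro k hk
  rw [Smap_length] at hk
  rw [hulen, Smap_getD z hk, u_getD hne h0 k, h k (by omega)]
  exact congrArg (x.getD (k % x.length) 0 + ·) (h (k + 1) (by omega))

def window (v : ℕ → ZMod 2) (i m : ℕ) : List (ZMod 2) :=
  (List.range m).map fun k => v (i + k)

lemma window_length (v : ℕ → ZMod 2) (i m : ℕ) : (window v i m).length = m := by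
  simp [window]

lemma window_getD {v : ℕ → ZMod 2} {i m k : ℕ} (h : k < m) :
    (window v i m).getD k 0 = v (i + k) := by
  have h' : k < (window v i m).length := by rw [window_length]; exact h
  rw [List.getD_eq_getElem _ 0 h']
  simp [window]

lemma window_occurs (v : ℕ → ZMod 2) (i m : ℕ) : OccursAt v (window v i m) i := by
  rw [occursAt_iff]
  intro k hk
  rw [window_length] at hk
  exact window_getD hk

lemma Smap_window {v : ℕ → ZMod 2} {z' : List (ZMod 2)} {i : ℕ}
    (h : OccursAt (SSeq v) z' i) : Smap (window v i (z'.length + 1)) = z' := by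
  rw [occursAt_iff] at h
  apply List.ext_getElem
  · rw [Smap_length, window_length]
    omega
  · intro j hj hj'
    have hj2 : j < (window v i (z'.length + 1)).length - 1 := by
      rw [window_length]; omega
    rw [← List.getD_eq_getElem _ 0 hj, ← List.getD_eq_getElem _ 0 hj']
    rw [Smap_getD _ hj2, window_getD (by omega), window_getD (by omega),
      h j hj', SSeq, Nat.add_assoc]

lemma Smap_map_add_one (z : List (ZMod 2)) :
    Smap (z.map (· + 1)) = Smap z := by
  have hl : (z.map (· + 1)).length = z.length := by simp
  unfold Smap
  rw [hl]
  apply List.map_congr_left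
  intro i hi
  rw [List.mem_range] at hi
  have g : ∀ j, j < z.length → (z.map (· + 1)).getD j 0 = z.getD j 0 + 1 := by
    intro j hj
    have hj' : j < (z.map (· + 1)).length := by rw [hl]; exact hj
    rw [List.getD_eq_getElem _ 0 hj', List.getD_eq_getElem _ 0 hj]
    simp
  rw [g i (by omega), g (i + 1) (by omega)]
  have : ∀ a b : ZMod 2, a + 1 + (b + 1) = a + b := by decide
  exact this _ _

lemma root_lift {x z : List (ZMod 2)} (hne : x ≠ []) (h0 : x.getD 0 0 = 0)
    (hz0 : z.getD 0 0 = 0)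
    (h : HasRoot (Smap z) (Smap (x ++ [0]))) : HasRoot z x := by
  have hn : 0 < x.length := List.length_pos_iff.mpr hne
  have hulen : (Smap (x ++ [0])).length = x.length := by rw [Smap_length]; simp
  rw [hasRoot_iff (Smap_ne_nil hne), hulen] at h
  rw [hasRoot_iff hne]
  intro k hk
  induction k with
  | zero => simpa using hz0.trans h0.symm
  | succ k ih =>
    have hk1 : k < z.length := by omega
    have hk2 : k < z.length - 1 := by omega
    have ihk := ih hk1
    have hs := h k (by rw [Smap_length]; omega)
    rw [Smap_getD z hk2, u_getD hne h0 k, ihk] at hs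
    exact add_left_cancel hs

lemma occ_prefix {w : ℕ → ZMod 2} {z' u : List (ZMod 2)} {i : ℕ}
    (hocc : OccursAt w z' i) (hroot : HasRoot z' u) (hlen : u.length ≤ z'.length) :
    OccursAt w u i := by
  have hune := hroot.1
  rw [hasRoot_iff hune] at hroot
  rw [occursAt_iff] at hocc ⊢
  intro k hk
  rw [← Nat.mod_eq_of_lt hk, ← hroot k (by omega), hocc k (by omega)]
  rw [Nat.mod_eq_of_lt hk]

lemma telescope (a : ℕ → ZMod 2) :
    ∀ m, ((List.range m).map (fun i => a i + a (i + 1))).sum = a 0 + a m := by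
  intro m
  induction m with
  | zero =>
    have : ∀ p : ZMod 2, p + p = 0 := by decide
    simp [this]
  | succ m ih =>
    rw [List.range_succ, List.map_append, List.sum_append, ih]
    have : ∀ p q r : ZMod 2, p + q + (q + r) = p + r := by decide
    simpa using this _ _ _

lemma count_one_eq_sum (l : List (ZMod 2)) : (l.count 1 : ZMod 2) = l.sum := by
  induction l with
  | nil => simp
  | cons a l ih =>
    have ha : ∀ b : ZMod 2, b = 0 ∨ b = 1 := by decide
    have ha := ha a
    rw [List.sum_cons, List.count_cons, ← ih]
    rcases ha with h | h <;> subst h <;> simp [add_comm]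

lemma even_count_iff (l : List (ZMod 2)) : Even (l.count 1) ↔ l.sum = 0 := by
  rw [← count_one_eq_sum, even_iff_two_dvd, ← ZMod.natCast_eq_zero_iff]

lemma smap_sum_zero {x : List (ZMod 2)} (hne : x ≠ []) (h0 : x.getD 0 0 = 0) :
    (Smap (x ++ [0])).sum = 0 := by
  have hn : 0 < x.length := List.length_pos_iff.mpr hne
  unfold Smap
  rw [telescope]
  have e1 : (x ++ [0] : List (ZMod 2)).getD 0 0 = 0 := by
    rw [List.getD_append _ _ _ _ hn]; exact h0
  have hlen : (x ++ [0] : List (ZMod 2)).length - 1 = x.length := by simp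
  have e2 : (x ++ [0] : List (ZMod 2)).getD x.length 0 = 0 := by
    rw [List.getD_append_right _ _ _ _ (le_refl _)]; simp
  rw [hlen, e1, e2]
  rfl

theorem main_part (v : ℕ → ZMod 2)
    (hE : ∀ w : List (ZMod 2), IsFactor v w → IsFactor v (w.map (· + 1)))
    (x : List (ZMod 2)) (hx : x ≠ []) (h0 : x.getD 0 0 = 0)
    (hind : (1 : EReal) < ind v x) :
    IsFactor (SSeq v) (Smap (x ++ [0])) ∧
    ind (SSeq v) (Smap (x ++ [0])) +
      (((1 : ℝ) / ((Smap (x ++ [0])).length : ℝ) : ℝ) : EReal) = ind v x := by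
  have hn : 0 < x.length := List.length_pos_iff.mpr hx
  have hulen : (Smap (x ++ [0])).length = x.length := by rw [Smap_length]; simp
  set u : List (ZMod 2) := Smap (x ++ [0]) with hu
  set n : ℕ := x.length with hnn
  have hnR : (0 : ℝ) < (n : ℝ) := by exact_mod_cast hn
  set cr : ℝ := 1 / (n : ℝ) with hcr
  set c : EReal := (cr : EReal) with hc
  set A : Set EReal := {e : EReal | ∃ z : List (ZMod 2), IsFactor v z ∧ HasRoot z x ∧
    e = (((z.length : ℝ) / (x.length : ℝ) : ℝ) : EReal)} with hA
  set B : Set EReal := {e : EReal | ∃ z : List (ZMod 2), IsFactor (SSeq v) z ∧ HasRoot z u ∧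
    e = (((z.length : ℝ) / (u.length : ℝ) : ℝ) : EReal)} with hB
  have hindA : ind v x = sSup A := rfl
  have hindB : ind (SSeq v) u = sSup B := rfl
  -- 0 ∈ B
  have memB0 : (0 : EReal) ∈ B := by
    refine ⟨[], ⟨0, fun k hk => absurd hk (by simp)⟩,
      ⟨Smap_ne_nil hx, fun k hk => absurd hk (by simp)⟩, by norm_num⟩
  -- F1
  have F1 : ∀ e ∈ A, ∃ e' ∈ B, e ≤ e' + c := by
    rintro e ⟨z, hzf, hzr, rfl⟩
    rcases Nat.eq_zero_or_pos z.length with hz0 | hz0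
    · refine ⟨0, memB0, ?_⟩
      rw [hz0, zero_add]
      simp only [Nat.cast_zero, zero_div, EReal.coe_zero]
      exact EReal.coe_nonneg.mpr (by positivity)
    · obtain ⟨i, hi⟩ := hzf
      refine ⟨(((((Smap z).length : ℝ) / (u.length : ℝ) : ℝ)) : EReal),
        ⟨Smap z, ⟨i, occ_push hi⟩, root_push hx h0 hzr, rfl⟩, le_of_eq ?_⟩
      rw [hulen, Smap_length, hc, hcr, ← EReal.coe_add, EReal.coe_eq_coe_iff,
        ← add_div, Nat.cast_sub (by omega)]
      ring_nf
      rfl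
  -- F2
  have F2 : ∀ e' ∈ B, e' + c ∈ A := by
    rintro e' ⟨z', ⟨i, hocc⟩, hroot, rfl⟩
    have hSw : Smap (window v i (z'.length + 1)) = z' := Smap_window hocc
    have hzocc : OccursAt v (window v i (z'.length + 1)) i := window_occurs v i _
    have hwl : (window v i (z'.length + 1)).length = z'.length + 1 := window_length v i _
    have hval : ∀ b : ZMod 2, b = 0 ∨ b = 1 := by decide
    have heq : (((z'.length : ℝ) / (u.length : ℝ) : ℝ) : EReal) + c
        = ((((z'.length + 1 : ℕ) : ℝ) / (n : ℝ) : ℝ) : EReal) := by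
      rw [hulen, hc, hcr, ← EReal.coe_add, EReal.coe_eq_coe_iff, ← add_div]
      push_cast
      ring_nf
    rcases hval (v i) with hvi | hvi
    · have hz0 : (window v i (z'.length + 1)).getD 0 0 = 0 := by
        rw [window_getD (by omega)]; simpa using hvi
      have hzr : HasRoot (window v i (z'.length + 1)) x :=
        root_lift hx h0 hz0 (by rw [hSw]; exact hroot)
      exact ⟨window v i (z'.length + 1), ⟨i, hzocc⟩, hzr, by rw [heq, hwl]⟩
    · set z₂ : List (ZMod 2) := (window v i (z'.length + 1)).map (· + 1) with hz₂
      have hz₂f : IsFactor v z₂ := hE _ ⟨i, hzocc⟩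
      have hz₂l : z₂.length = z'.length + 1 := by rw [hz₂, List.length_map, hwl]
      have hz₂0 : z₂.getD 0 0 = 0 := by
        have h0l : 0 < z₂.length := by omega
        rw [List.getD_eq_getElem _ 0 h0l]
        simp only [hz₂, List.getElem_map]
        rw [← List.getD_eq_getElem _ 0 (by omega : 0 < (window v i (z'.length + 1)).length)]
        rw [window_getD (by omega)]
        simp only [Nat.add_zero]
        rw [hvi]
        decide
      have hzr : HasRoot z₂ x := by
        apply root_lift hx h0 hz₂0
        rw [hz₂, Smap_map_add_one, hSw]
        exact hroot
      exact ⟨z₂, hz₂f, hzr, by rw [heq, hz₂l]⟩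
  -- factor claim
  obtain ⟨e, heA, he1⟩ := lt_sSup_iff.mp hind
  obtain ⟨z, hzf, hzr, rfl⟩ := heA
  have hzlen : n < z.length := by
    rw [← EReal.coe_one, EReal.coe_lt_coe_iff] at he1
    by_contra hcon
    push_neg at hcon
    have : ((z.length : ℝ) / (n : ℝ)) ≤ 1 := by
      rw [div_le_one hnR]; exact_mod_cast hcon
    linarith
  obtain ⟨i, hi⟩ := hzf
  have hfac : IsFactor (SSeq v) u := by
    refine ⟨i, occ_prefix (occ_push hi) (root_push hx h0 hzr) ?_⟩
    rw [hulen, Smap_length]; omega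
  refine ⟨hfac, ?_⟩
  -- sup equality
  rw [hindA, hindB, hulen]
  show sSup B + c = sSup A
  have hAle : sSup A ≤ sSup B + c := by
    apply sSup_le
    intro e he
    obtain ⟨e', he'B, hle⟩ := F1 e he
    exact hle.trans (add_le_add_left (le_sSup he'B) c)
  have h2 : ∀ e' ∈ B, e' + c ≤ sSup A := fun e' h => le_sSup (F2 e' h)
  by_cases hSA : sSup A = ⊤
  · have htop : sSup B + c = ⊤ := top_le_iff.mp (hSA ▸ hAle)
    rw [htop, hSA]
  · have hle2 : sSup B ≤ sSup A - c := by
      apply sSup_le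
      intro e' h
      exact (EReal.le_sub_iff_add_le (Or.inl (EReal.coe_ne_bot _))
        (Or.inl (EReal.coe_ne_top _))).mpr (h2 e' h)
    have : sSup B + c ≤ sSup A := by
      have := add_le_add_left hle2 c
      rwa [EReal.sub_add_cancel] at this
    exact le_antisymm this hAle

/-- For a binary aperiodic uniformly recurrent sequence `v` whose language is
closed under the exchange of letters, any non-empty factor `x` beginning with
`0` with `ind(x) > 1` satisfies: `u = S(x0)` is a stable factor of `S(v)` with
`ind(u) + 1/|u| = ind(x)`. -/
theorem ind_Smap_relation (v : ℕ → ZMod 2)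
    (hap : Aperiodic v) (hur : UniformlyRecurrent v)
    (hE : ∀ w : List (ZMod 2), IsFactor v w → IsFactor v (w.map (· + 1)))
    (x : List (ZMod 2)) (hx : x ≠ []) (hx0 : x.head? = some 0)
    (hxf : IsFactor v x) (hind : (1 : EReal) < ind v x) :
    Even ((Smap (x ++ [0])).count 1) ∧
    IsFactor (SSeq v) (Smap (x ++ [0])) ∧
    ind (SSeq v) (Smap (x ++ [0])) +
      (((1 : ℝ) / ((Smap (x ++ [0])).length : ℝ) : ℝ) : EReal) = ind v x := by
  have h0 : x.getD 0 0 = 0 := by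
    cases x with
    | nil => exact absurd rfl hx
    | cons a l =>
      simp only [List.head?_cons, Option.some.injEq] at hx0
      simp [hx0]
  have hmain := main_part v hE x hx h0 hind
  refine ⟨?_, hmain.1, hmain.2⟩
  rw [even_count_iff]
  exact smap_sum_zero hx h0
end
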